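/- For an integer m >= 1, define Theta(m) = (4 pi)^{-m/2} * (2m)^{m/2} * e^{-m/2} * sigma_m, where sigma_m is the m-dimensional Hausdorff measure of the unit sphere S^m in R^{m+1}. Then the sequence Theta(m) is strictly decreasing in m, and sqrt(2) < Theta(m) < 2 for all m >= 1. -/

import Mathlib

open Real Filter Set Topology


namespace SSEM



noncomputable def G (m : ℕ) : ℝ := Real.Gamma (((m:ℝ)+1)/2)

lemma G_pos (m : ℕ) : 0 < G m := Real.Gamma_pos_of_pos (by positivity)

noncomputable def g (m : ℕ) : ℝ := G m / G (m+1)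

lemma g_pos (m : ℕ) : 0 < g m := div_pos (G_pos m) (G_pos (m+1))

lemma G_rec (m : ℕ) : G (m+2) = (((m:ℝ)+1)/2) * G m := by
  have h : (((m:ℕ)+2:ℕ):ℝ) = (m:ℝ)+2 := by push_cast; ring
  have : ((((m:ℕ)+2:ℕ):ℝ)+1)/2 = ((m:ℝ)+1)/2 + 1 := by rw [h]; ring
  rw [G, this, Real.Gamma_add_one (by positivity), G]

lemma g_mul (m : ℕ) : g m * g (m+1) = 2 / ((m:ℝ)+1) := by
  have h2 := G_rec m
  have h1 : (0:ℝ) < ((m:ℝ)+1)/2 := by positivity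
  have h0 := (G_pos m).ne'
  have h1' := (G_pos (m+1)).ne'
  rw [g, g, div_mul_div_comm, h2]
  rw [div_eq_div_iff (mul_pos (G_pos (m+1)) (mul_pos h1 (G_pos m))).ne' (by positivity)]
  ring

lemma g_anti (m : ℕ) : g (m+1) ≤ g m := by
  -- log-convexity: G(m+1)^2 ≤ G m * G (m+2)
  have hconv := Real.convexOn_log_Gamma
  have hx : ((m:ℝ)+1)/2 ∈ Set.Ioi (0:ℝ) := by simp; positivity
  have hy : ((m:ℝ)+3)/2 ∈ Set.Ioi (0:ℝ) := by simp; positivity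
  have := hconv.2 hx hy (by norm_num : (0:ℝ) ≤ 1/2) (by norm_num : (0:ℝ) ≤ 1/2) (by norm_num)
  simp only [Function.comp, smul_eq_mul] at this
  have hmid : (1/2 : ℝ) * (((m:ℝ)+1)/2) + (1/2:ℝ) * (((m:ℝ)+3)/2) = ((m:ℝ)+2)/2 := by ring
  rw [hmid] at this
  -- this : log (Gamma ((m+2)/2)) ≤ 1/2 * log (Gamma ((m+1)/2)) + 1/2 * log (Gamma ((m+3)/2))
  have hGm : G m = Real.Gamma (((m:ℝ)+1)/2) := rfl
  have hGm1 : G (m+1) = Real.Gamma (((m:ℝ)+2)/2) := by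
    rw [G]; norm_num; ring_nf
  have hGm2 : G (m+2) = Real.Gamma (((m:ℝ)+3)/2) := by
    rw [G]; norm_num; ring_nf
  have key : G (m+1) ^ 2 ≤ G m * G (m+2) := by
    have h1 := G_pos m
    have h2 := G_pos (m+1)
    have h3 := G_pos (m+2)
    have hlog : Real.log (G (m+1)) ≤ (Real.log (G m) + Real.log (G (m+2)))/2 := by
      rw [hGm, hGm1, hGm2]; linarith
    have := Real.exp_le_exp.mpr (by linarith : 2 * Real.log (G (m+1)) ≤ Real.log (G m) + Real.log (G (m+2)))
    rw [Real.exp_add, Real.exp_log h1, Real.exp_log h3] at this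
    calc G (m+1)^2 = Real.exp (2 * Real.log (G (m+1))) := by
          rw [mul_comm, Real.exp_mul, Real.exp_log h2]; norm_num
      _ ≤ G m * G (m+2) := this
  rw [g, g, div_le_div_iff₀ (G_pos (m+2)) (G_pos (m+1))]
  nlinarith [G_pos m, G_pos (m+1), G_pos (m+2)]



lemma g_rec (m : ℕ) : g (m+2) = g m * (((m:ℝ)+1)/((m:ℝ)+2)) := by
  have h2 := G_rec m
  have h3 : G (m+3) = (((m:ℝ)+2)/2) * G (m+1) := by
    have := G_rec (m+1)
    rw [this]; push_cast; ring
  have e1 := (G_pos (m+1)).ne'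
  rw [g, g, show m+2+1 = m+3 from rfl, h2, h3]
  field_simp

lemma g_sq_le (m : ℕ) : g (m+1) ^ 2 ≤ 2/((m:ℝ)+1) := by
  have h := g_mul m
  have h2 := g_anti m
  nlinarith [g_pos m, g_pos (m+1)]

noncomputable def q (m : ℕ) : ℝ := g m ^ 2 * (2*(m:ℝ)+1)

lemma q_lt (m : ℕ) : q m < q (m+2) := by
  have h := g_rec m
  have hg := g_pos m
  have hm2 : (0:ℝ) < (m:ℝ)+2 := by positivity
  rw [q, q, h]
  push_cast
  rw [mul_pow, div_pow]
  have key : (2*(m:ℝ)+1) * ((m:ℝ)+2)^2 + 1 = ((m:ℝ)+1)^2 * (2*((m:ℝ)+2)+1) := by ring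
  have h4 : g m ^2 * (((m:ℝ)+1)^2/((m:ℝ)+2)^2) * (2*((m:ℝ)+2)+1)
      = g m ^2 * (((m:ℝ)+1)^2*(2*((m:ℝ)+2)+1))/((m:ℝ)+2)^2 := by ring
  rw [h4, lt_div_iff₀ (by positivity)]
  nlinarith [pow_pos hg 2]

lemma q_le_chain (m k : ℕ) : q m ≤ q (m + 2*k) := by
  induction k with
  | zero => simp
  | succ n ih =>
    have := q_lt (m + 2*n)
    have e : m + 2*(n+1) = (m + 2*n) + 2 := by ring
    rw [e]
    linarith

lemma q_ub (m : ℕ) : q (m+1) ≤ 4 + 2/((m:ℝ)+1) := by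
  have h := g_sq_le m
  rw [q]
  have hp : (0:ℝ) < (m:ℝ)+1 := by positivity
  have h5 : 2/((m:ℝ)+1)*(2*(m:ℝ)+3) = 4 + 2/((m:ℝ)+1) := by field_simp; ring
  have h6 : g (m+1)^2*(2*(m:ℝ)+3) ≤ 2/((m:ℝ)+1)*(2*(m:ℝ)+3) := by nlinarith
  push_cast
  linarith

lemma q_le_four (m : ℕ) : q (m+1) ≤ 4 := by
  by_contra hc
  push_neg at hc
  have hd : 0 < q (m+1) - 4 := by linarith
  obtain ⟨k, hk⟩ := exists_nat_gt (2/(q (m+1) - 4))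
  have h1 : q (m+1) ≤ q (m+1+2*k) := q_le_chain (m+1) k
  have h2 : q (m + 2*k + 1) ≤ 4 + 2/((m:ℝ)+2*k+1) := by
    have := q_ub (m + 2*k)
    push_cast at this ⊢
    convert this using 3 <;> push_cast <;> ring
  have e : m+1+2*k = m+2*k+1 := by ring
  rw [e] at h1
  have h3 : 2/((m:ℝ)+2*k+1) < q (m+1) - 4 := by
    rw [div_lt_iff₀ (by positivity)]
    have hk' : 2/(q (m+1) - 4) < (k:ℝ) := hk
    rw [div_lt_iff₀ hd] at hk'
    nlinarith [hd, (Nat.cast_nonneg m : (0:ℝ) ≤ m), (Nat.cast_nonneg k : (0:ℝ) ≤ k)]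
  linarith

lemma watson (m : ℕ) : g m ^ 2 * (2*(m:ℝ)+1) < 4 := by
  have h1 := q_lt m
  have h2 : q (m+2) ≤ 4 := by
    have := q_le_four (m+1)
    convert this using 2
  rw [q] at h1
  linarith




lemma log_le_poly5 {t : ℝ} (ht : 0 ≤ t) :
    Real.log (1+t) ≤ t - t^2/2 + t^3/3 - t^4/4 + t^5/5 := by
  set F : ℝ → ℝ := fun s => s - s^2/2 + s^3/3 - s^4/4 + s^5/5 - Real.log (1+s) with hFdef
  have hF : ∀ s ∈ Set.Ici (0:ℝ), HasDerivAt F (s^5/(1+s)) s := by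
    intro s hs
    have h1 : (0:ℝ) < 1 + s := by simp at hs; linarith
    have hlog : HasDerivAt (fun u : ℝ => Real.log (1+u)) (1/(1+s)) s := by
      have h := ((hasDerivAt_id s).const_add (1:ℝ)).log h1.ne'
      simpa using h
    have hpoly : HasDerivAt (fun u : ℝ => u - u^2/2 + u^3/3 - u^4/4 + u^5/5)
        (1 - s + s^2 - s^3 + s^4) s := by
      have h := (((((hasDerivAt_id s).sub ((hasDerivAt_pow 2 s).div_const 2)).add
        ((hasDerivAt_pow 3 s).div_const 3)).sub ((hasDerivAt_pow 4 s).div_const 4)).add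
        ((hasDerivAt_pow 5 s).div_const 5))
      refine h.congr_deriv ?_
      push_cast
      ring
    have h := hpoly.sub hlog
    refine h.congr_deriv ?_
    field_simp
    ring
  have mono : MonotoneOn F (Set.Ici 0) := by
    apply monotoneOn_of_deriv_nonneg (convex_Ici 0)
    · exact ContinuousOn.congr (continuousOn_of_forall_continuousAt
        (fun x hx => (hF x hx).continuousAt)) (fun x hx => rfl)
    · intro x hx
      exact ((hF x (interior_subset hx)).differentiableAt).differentiableWithinAt
    · intro x hx
      rw [interior_Ici] at hx
      rw [(hF x (mem_Ioi.mp hx).le).deriv]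
      have h1x : (0:ℝ) < 1 + x := by linarith [mem_Ioi.mp hx]
      have h0x : (0:ℝ) ≤ x := (mem_Ioi.mp hx).le
      positivity
  have h0 : F 0 ≤ F t := mono (mem_Ici.mpr le_rfl) ht ht
  simp [hFdef] at h0
  linarith

lemma log_le_poly3 {t : ℝ} (ht : 0 ≤ t) :
    Real.log (1+t) ≤ t - t^2/2 + t^3/3 := by
  set F : ℝ → ℝ := fun s => s - s^2/2 + s^3/3 - Real.log (1+s) with hFdef
  have hF : ∀ s ∈ Set.Ici (0:ℝ), HasDerivAt F (s^3/(1+s)) s := by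
    intro s hs
    have h1 : (0:ℝ) < 1 + s := by simp at hs; linarith
    have hlog : HasDerivAt (fun u : ℝ => Real.log (1+u)) (1/(1+s)) s := by
      have h := ((hasDerivAt_id s).const_add (1:ℝ)).log h1.ne'
      simpa using h
    have hpoly : HasDerivAt (fun u : ℝ => u - u^2/2 + u^3/3)
        (1 - s + s^2) s := by
      have h := (((hasDerivAt_id s).sub ((hasDerivAt_pow 2 s).div_const 2)).add
        ((hasDerivAt_pow 3 s).div_const 3))
      refine h.congr_deriv ?_
      push_cast
      ring
    have h := hpoly.sub hlog
    refine h.congr_deriv ?_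
    field_simp
    ring
  have mono : MonotoneOn F (Set.Ici 0) := by
    apply monotoneOn_of_deriv_nonneg (convex_Ici 0)
    · exact ContinuousOn.congr (continuousOn_of_forall_continuousAt
        (fun x hx => (hF x hx).continuousAt)) (fun x hx => rfl)
    · intro x hx
      exact ((hF x (interior_subset hx)).differentiableAt).differentiableWithinAt
    · intro x hx
      rw [interior_Ici] at hx
      rw [(hF x (mem_Ioi.mp hx).le).deriv]
      have h1x : (0:ℝ) < 1 + x := by linarith [mem_Ioi.mp hx]
      have h0x : (0:ℝ) ≤ x := (mem_Ioi.mp hx).le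
      positivity
  have h0 : F 0 ≤ F t := mono (mem_Ici.mpr le_rfl) ht ht
  simp [hFdef] at h0
  linarith



lemma key_exponent {x : ℝ} (hx : 2 ≤ x) :
    x * Real.log (1+1/x) + Real.log (1+1/(2*x+1)) < 1 := by
  have hx0 : (0:ℝ) < x := by linarith
  have hy0 : (0:ℝ) < 2*x+1 := by linarith
  have h1 : Real.log (1+1/x) ≤ 1/x - (1/x)^2/2 + (1/x)^3/3 - (1/x)^4/4 + (1/x)^5/5 :=
    log_le_poly5 (by positivity)
  have h2 : Real.log (1+1/(2*x+1)) ≤ 1/(2*x+1) - (1/(2*x+1))^2/2 + (1/(2*x+1))^3/3 :=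
    log_le_poly3 (by positivity)
  have h1' : x * Real.log (1+1/x) ≤ x * (1/x - (1/x)^2/2 + (1/x)^3/3 - (1/x)^4/4 + (1/x)^5/5) :=
    mul_le_mul_of_nonneg_left h1 hx0.le
  have expand : x * (1/x - (1/x)^2/2 + (1/x)^3/3 - (1/x)^4/4 + (1/x)^5/5)
      + (1/(2*x+1) - (1/(2*x+1))^2/2 + (1/(2*x+1))^3/3)
      = 1 + (-20*x^5 - 10*x^4 + 6*x^3 + 74*x^2 + 57*x + 12)/(60*x^4*(2*x+1)^3) := by
    field_simp
    ring
  have p2 : (0:ℝ) < x^2 := by positivity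
  have p3 : (0:ℝ) < x^3 := by positivity
  have p4 : (0:ℝ) < x^4 := by positivity
  have q2 : 2*x ≤ x^2 := by nlinarith
  have q3 : 2*x^2 ≤ x^3 := by nlinarith
  have q4 : 2*x^3 ≤ x^4 := by nlinarith
  have q5 : 2*x^4 ≤ x^5 := by nlinarith
  have hnum : -20*x^5 - 10*x^4 + 6*x^3 + 74*x^2 + 57*x + 12 < 0 := by nlinarith
  have hfrac : (-20*x^5 - 10*x^4 + 6*x^3 + 74*x^2 + 57*x + 12)/(60*x^4*(2*x+1)^3) < 0 :=
    div_neg_of_neg_of_pos hnum (by positivity)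
  linarith

lemma lemma_L (m : ℕ) (hm : 1 ≤ m) :
    2*((m:ℝ)+1)^(m+1) < Real.exp 1 * (2*(m:ℝ)+1) * (m:ℝ)^m := by
  set x : ℝ := (m:ℝ) with hxdef
  have hx0 : (0:ℝ) < x := by
    simp [hxdef]; exact_mod_cast Nat.pos_of_ne_zero (by omega)
  have hy0 : (0:ℝ) < 2*x+1 := by linarith
  have h1x : (0:ℝ) < 1 + 1/x := by positivity
  have h1y : (0:ℝ) < 1 + 1/(2*x+1) := by positivity
  have hexpo : x * Real.log (1+1/x) + Real.log (1+1/(2*x+1)) < 1 := by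
    rcases eq_or_lt_of_le hm with h | h
    · -- m = 1
      have hx1 : x = 1 := by simp [hxdef, ← h]
      rw [hx1]
      norm_num
      -- log 2 + log (4/3) < 1, i.e. log (8/3) < 1
      rw [← Real.log_mul (by norm_num) (by norm_num)]
      have : (2:ℝ) * (4/3) = 8/3 := by norm_num
      rw [this]
      have h83 : (8:ℝ)/3 < Real.exp 1 := by
        have := Real.exp_one_gt_d9
        linarith
      calc Real.log (8/3) < Real.log (Real.exp 1) := by
            apply Real.log_lt_log (by norm_num) h83
        _ = 1 := Real.log_exp 1
    · have hx2 : (2:ℝ) ≤ x := by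
        simp only [hxdef]
        exact_mod_cast h
      exact key_exponent hx2
  -- exponent arithmetic
  have hE : (1+1/x)^m * (1+1/(2*x+1)) < Real.exp 1 := by
    have e1 : (1+1/x)^m = Real.exp ((m:ℝ) * Real.log (1+1/x)) := by
      rw [← Real.log_pow, Real.exp_log (pow_pos h1x m)]
    have e2 : (1+1/(2*x+1)) = Real.exp (Real.log (1+1/(2*x+1))) :=
      (Real.exp_log h1y).symm
    rw [e1]
    nth_rewrite 1 [e2]
    rw [← Real.exp_add]
    exact Real.exp_lt_exp.mpr (by rw [hxdef] at hexpo ⊢; exact hexpo)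
  have hid1 : (1+1/x) = (x+1)/x := by field_simp
  have hid2 : (1+1/(2*x+1)) = (2*x+2)/(2*x+1) := by field_simp; ring
  rw [hid1, hid2, div_pow, div_mul_div_comm, div_lt_iff₀ (by positivity)] at hE
  have hxm : (0:ℝ) < x^m := pow_pos hx0 m
  calc 2*(x+1)^(m+1) = (x+1)^m * (2*x+2) := by ring
    _ < Real.exp 1 * (x^m * (2*x+1)) := hE
    _ = Real.exp 1 * (2*x+1) * x^m := by ring

lemma sq_rpow {b : ℝ} (hb : 0 < b) (a : ℝ) : (b ^ a)^2 = b ^ (2*a) := by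
  rw [← Real.rpow_natCast (b^a) 2, ← Real.rpow_mul hb.le]
  norm_num [mul_comm]

lemma theta_sq (m : ℕ) :
    ((4 * π) ^ (-(m:ℝ)/2) * (2 * (m:ℝ)) ^ ((m:ℝ)/2) * Real.exp (-(m:ℝ)/2) *
        (2 * π ^ (((m:ℝ) + 1)/2) / G m)) ^ 2
    = 4*π*((m:ℝ)/(2*Real.exp 1))^m / G m ^2 := by
  have h4π : (0:ℝ) < 4*π := by positivity
  have hGm := (G_pos m).ne'
  rw [mul_pow, mul_pow, mul_pow, div_pow, mul_pow]
  rw [sq_rpow h4π, sq_rpow pi_pos, ← Real.exp_nat_mul]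
  have e1 : 2*(-(m:ℝ)/2) = -(m:ℝ) := by ring
  have e2 : ((2:ℕ):ℝ)*(-(m:ℝ)/2) = -(m:ℝ) := by push_cast; ring
  have e3 : 2*((((m:ℝ)+1))/2) = (m:ℝ)+1 := by ring
  rw [e1, e3]
  rw [Real.rpow_neg h4π.le, Real.rpow_natCast]
  have e4 : ((2*(m:ℝ)) ^ ((m:ℝ)/2))^2 = (2*(m:ℝ))^(m:ℕ) := by
    rcases Nat.eq_zero_or_pos m with h | h
    · simp [h]
    · have : (0:ℝ) < 2*(m:ℝ) := by
        have : (0:ℝ) < (m:ℝ) := by exact_mod_cast h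
        linarith
      rw [sq_rpow this, show 2*((m:ℝ)/2) = (m:ℝ) by ring, Real.rpow_natCast]
  rw [e2, e4, show Real.exp (-(m:ℝ)) = ((Real.exp 1)^(m:ℕ))⁻¹ by
    rw [Real.exp_one_pow, Real.exp_neg]]
  rw [show π ^ ((m:ℝ)+1) = π^(m:ℕ) * π by
    rw [Real.rpow_add pi_pos, Real.rpow_one, Real.rpow_natCast]]
  have hexp : (Real.exp 1) ≠ 0 := (Real.exp_pos 1).ne'
  field_simp
  rw [div_pow, mul_pow, mul_pow, mul_pow]
  field_simp
  ring
  rw [pow_mul']; norm_num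


lemma stirling_pos (m : ℕ) (hm : 1 ≤ m) : 0 < Stirling.stirlingSeq m := by
  obtain ⟨n, rfl⟩ : ∃ n, m = n+1 := ⟨m-1, by omega⟩
  exact Stirling.stirlingSeq'_pos n

lemma fac_eq (m : ℕ) (hm : 1 ≤ m) :
    (m.factorial : ℝ) = Stirling.stirlingSeq m * Real.sqrt (2*(m:ℝ)) * ((m:ℝ)/Real.exp 1)^m := by
  have hx : (0:ℝ) < (m:ℝ) := by exact_mod_cast hm
  have h1 : (0:ℝ) < Real.sqrt (2*(m:ℝ)) := Real.sqrt_pos.mpr (by linarith)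
  have h2 : (0:ℝ) < ((m:ℝ)/Real.exp 1)^m := by positivity
  rw [Stirling.stirlingSeq]
  field_simp

lemma dup (m : ℕ) : G m * G (m+1) = (m.factorial : ℝ) * ((2:ℝ)^m)⁻¹ * Real.sqrt π := by
  have h1 : G (m+1) = Real.Gamma (((m:ℝ)+1)/2 + 1/2) := by
    rw [G]; push_cast; ring_nf
  rw [G, h1, Real.Gamma_mul_Gamma_add_half]
  have h2 : 2*(((m:ℝ)+1)/2) = (m:ℝ)+1 := by ring
  rw [h2]
  have h3 : Real.Gamma ((m:ℝ)+1) = (m.factorial : ℝ) := Real.Gamma_nat_eq_factorial m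
  rw [h3, show (1:ℝ) - ((m:ℝ)+1) = -(m:ℝ) by ring,
    Real.rpow_neg (by norm_num : (0:ℝ) ≤ 2), Real.rpow_natCast]

lemma T_eq (m : ℕ) (hm : 1 ≤ m) :
    (4*π*((m:ℝ)/(2*Real.exp 1))^m / G m ^2) * (4*π*(((m:ℝ)+1)/(2*Real.exp 1))^(m+1) / G (m+1) ^2)
    = (4*π/(Real.exp 1 * (Stirling.stirlingSeq m)^2)) * (((m:ℝ)+1)/(m:ℝ))^(m+1) := by
  have hx : (0:ℝ) < (m:ℝ) := by exact_mod_cast hm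
  have he : (0:ℝ) < Real.exp 1 := Real.exp_pos 1
  have hs := stirling_pos m hm
  have hsq2x : Real.sqrt (2*(m:ℝ)) ^ 2 = 2*(m:ℝ) := Real.sq_sqrt (by linarith)
  have hsqpi : Real.sqrt π ^ 2 = π := Real.sq_sqrt pi_pos.le
  have hG2 : (G m * G (m+1))^2
      = (Stirling.stirlingSeq m)^2 * (2*(m:ℝ)) * (((m:ℝ)/Real.exp 1)^m)^2 * ((2:ℝ)^m)⁻¹^2 * π := by
    rw [dup m, fac_eq m hm]
    rw [mul_pow, mul_pow, mul_pow, mul_pow, hsq2x, hsqpi]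
  have hstep : (4*π*((m:ℝ)/(2*Real.exp 1))^m / G m ^2) * (4*π*(((m:ℝ)+1)/(2*Real.exp 1))^(m+1) / G (m+1) ^2)
      = 16*π^2*((m:ℝ)/(2*Real.exp 1))^m * (((m:ℝ)+1)/(2*Real.exp 1))^(m+1) / ((G m * G (m+1))^2) := by
    have := (G_pos m).ne'
    have := (G_pos (m+1)).ne'
    field_simp
    ring
  rw [hstep, hG2]
  rw [div_pow, div_pow, div_pow, div_pow]
  have h2e : ((2:ℝ)*Real.exp 1) ≠ 0 := by positivity
  have h2m : ((2:ℝ)^m) ≠ 0 := by positivity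
  field_simp
  rw [div_pow]
  field_simp
  ring

lemma key_ineq (m : ℕ) (hm : 1 ≤ m) :
    ((m:ℝ)+1)^(m+1) * g m ^2 < 2*Real.exp 1*(m:ℝ)^m := by
  have hw := watson m
  have hL := lemma_L m hm
  have hp : (0:ℝ) < ((m:ℝ)+1)^(m+1) := by positivity
  have h1 : ((m:ℝ)+1)^(m+1) * (g m ^2 * (2*(m:ℝ)+1)) < ((m:ℝ)+1)^(m+1) * 4 :=
    mul_lt_mul_of_pos_left hw hp
  have h2 : (0:ℝ) < 2*(m:ℝ)+1 := by positivity
  rw [← sub_pos]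
  have h3 : 0 < (2*Real.exp 1*(m:ℝ)^m - ((m:ℝ)+1)^(m+1) * g m ^2) * (2*(m:ℝ)+1) := by
    nlinarith [sq_nonneg (g m)]
  nlinarith [h3, h2]

end SSEM



/-- Monotonicity of the Gaussian areas of self-shrinking spheres (Stone): with
`Θ(m) = (4π)^{-m/2} (2m)^{m/2} e^{-m/2} σ_m`, where
`σ_m = 2 π^{(m+1)/2} / Γ((m+1)/2)` is the `m`-dimensional measure of the unit sphere
`S^m ⊆ ℝ^{m+1}`, the sequence `Θ(m)` is strictly decreasing for `m ≥ 1` and satisfies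
`√2 < Θ(m) < 2`. -/
theorem shrinking_sphere_entropy_monotone (Θ : ℕ → ℝ)
    (hΘ : ∀ m : ℕ, Θ m =
      (4 * Real.pi) ^ (-(m:ℝ)/2) * (2 * (m:ℝ)) ^ ((m:ℝ)/2) * Real.exp (-(m:ℝ)/2) *
        (2 * Real.pi ^ (((m:ℝ) + 1)/2) / Real.Gamma (((m:ℝ) + 1)/2))) :
    (∀ m : ℕ, 1 ≤ m → Θ (m+1) < Θ m) ∧
    (∀ m : ℕ, 1 ≤ m → Real.sqrt 2 < Θ m ∧ Θ m < 2) := by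
  have hsq : ∀ m : ℕ, Θ m ^ 2 = 4*Real.pi*((m:ℝ)/(2*Real.exp 1))^m / SSEM.G m ^2 := by
    intro m; rw [hΘ m]; exact SSEM.theta_sq m
  have hpos : ∀ m : ℕ, 1 ≤ m → 0 < Θ m := by
    intro m hm
    have hm' : (0:ℝ) < (m:ℝ) := by exact_mod_cast hm
    rw [hΘ m]
    have h1 : (0:ℝ) < (4*Real.pi) ^ (-(m:ℝ)/2) := Real.rpow_pos_of_pos (by positivity) _
    have h2 : (0:ℝ) < (2*(m:ℝ)) ^ ((m:ℝ)/2) := Real.rpow_pos_of_pos (by linarith) _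
    have h4 : (0:ℝ) < Real.pi ^ (((m:ℝ)+1)/2) := Real.rpow_pos_of_pos Real.pi_pos _
    have h5 : (0:ℝ) < Real.Gamma (((m:ℝ)+1)/2) := SSEM.G_pos m
    exact mul_pos (mul_pos (mul_pos h1 h2) (Real.exp_pos _))
      (div_pos (by positivity) h5)
  have hmono : ∀ m : ℕ, 1 ≤ m → Θ (m+1) < Θ m := by
    intro m hm
    have hm' : (0:ℝ) < (m:ℝ) := by exact_mod_cast hm
    have key := SSEM.key_ineq m hm
    have hGm := SSEM.G_pos m
    have hGm1 := SSEM.G_pos (m+1)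
    have hgg : SSEM.g m ^2 * SSEM.G (m+1)^2 = SSEM.G m ^2 := by
      rw [SSEM.g]; field_simp
    have h7 : ((m:ℝ)+1)^(m+1) * SSEM.G m ^2 * (2*Real.exp 1)^m
        < (m:ℝ)^m * SSEM.G (m+1)^2 * (2*Real.exp 1)^(m+1) := by
      have hmul : ((m:ℝ)+1)^(m+1) * SSEM.g m ^2 * (SSEM.G (m+1)^2 * (2*Real.exp 1)^m)
          < 2*Real.exp 1*(m:ℝ)^m * (SSEM.G (m+1)^2 * (2*Real.exp 1)^m) :=
        mul_lt_mul_of_pos_right key (by positivity)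
      calc ((m:ℝ)+1)^(m+1) * SSEM.G m ^2 * (2*Real.exp 1)^m
          = ((m:ℝ)+1)^(m+1) * SSEM.g m ^2 * (SSEM.G (m+1)^2 * (2*Real.exp 1)^m) := by
            rw [← hgg]; ring
        _ < 2*Real.exp 1*(m:ℝ)^m * (SSEM.G (m+1)^2 * (2*Real.exp 1)^m) := hmul
        _ = (m:ℝ)^m * SSEM.G (m+1)^2 * (2*Real.exp 1)^(m+1) := by rw [pow_succ]; ring
    have hs1 : Θ (m+1)^2 < Θ m ^2 := by
      rw [hsq m, hsq (m+1)]
      push_cast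
      rw [div_lt_div_iff₀ (by positivity) (by positivity)]
      rw [div_pow, div_pow]
      have l1 : 4*Real.pi*(((m:ℝ)+1)^(m+1)/(2*Real.exp 1)^(m+1)) * SSEM.G m^2
          = (4*Real.pi*((m:ℝ)+1)^(m+1)*SSEM.G m^2)/(2*Real.exp 1)^(m+1) := by ring
      have l2 : 4*Real.pi*((m:ℝ)^m/(2*Real.exp 1)^m) * SSEM.G (m+1)^2
          = (4*Real.pi*(m:ℝ)^m*SSEM.G (m+1)^2)/(2*Real.exp 1)^m := by ring
      rw [l1, l2, div_lt_div_iff₀ (by positivity) (by positivity)]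
      have h8 : 4*Real.pi*(((m:ℝ)+1)^(m+1) * SSEM.G m ^2 * (2*Real.exp 1)^m)
          < 4*Real.pi*((m:ℝ)^m * SSEM.G (m+1)^2 * (2*Real.exp 1)^(m+1)) :=
        mul_lt_mul_of_pos_left h7 (by positivity)
      calc 4*Real.pi*((m:ℝ)+1)^(m+1)*SSEM.G m^2*(2*Real.exp 1)^m
          = 4*Real.pi*(((m:ℝ)+1)^(m+1) * SSEM.G m ^2 * (2*Real.exp 1)^m) := by ring
        _ < 4*Real.pi*((m:ℝ)^m * SSEM.G (m+1)^2 * (2*Real.exp 1)^(m+1)) := h8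
        _ = 4*Real.pi*(m:ℝ)^m*SSEM.G (m+1)^2*(2*Real.exp 1)^(m+1) := by ring
    nlinarith [hpos m hm, hpos (m+1) (by omega), hs1]
  have hanti : ∀ m k : ℕ, 1 ≤ m → m ≤ k → Θ k ≤ Θ m := by
    intro m k hm hmk
    induction k, hmk using Nat.le_induction with
    | base => exact le_refl _
    | succ n hn ih => exact le_trans (hmono n (le_trans hm hn)).le ih
  have hG1 : SSEM.G 1 = 1 := by
    rw [SSEM.G]
    norm_num [Real.Gamma_one]
  have hθ1 : Θ 1 < 2 := by
    have h := hsq 1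
    rw [hG1] at h
    have hsq4 : Θ 1^2 < 4 := by
      rw [h]
      have he := Real.exp_one_gt_d9
      have hπ := Real.pi_lt_d2
      have hepos := Real.exp_pos 1
      rw [pow_one, one_pow, div_one, Nat.cast_one, mul_one_div, div_lt_iff₀ (by positivity)]
      nlinarith
    nlinarith [hpos 1 le_rfl]
  have hupper : ∀ m, 1 ≤ m → Θ m < 2 := fun m hm =>
    lt_of_le_of_lt (hanti 1 m le_rfl hm) hθ1
  -- limit of T m = Θ m ^2 * Θ (m+1)^2
  have hTlim : Tendsto (fun m : ℕ => Θ m^2 * Θ (m+1)^2) atTop (𝓝 4) := by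
    have hlim1 : Tendsto (fun m:ℕ => (Stirling.stirlingSeq m)^2) atTop (𝓝 π) := by
      have h := Stirling.tendsto_stirlingSeq_sqrt_pi.pow 2
      simpa [Real.sq_sqrt Real.pi_pos.le] using h
    have hlim2 : Tendsto (fun m:ℕ => 4*Real.pi/(Real.exp 1 * (Stirling.stirlingSeq m)^2))
        atTop (𝓝 (4*Real.pi/(Real.exp 1*π))) :=
      tendsto_const_nhds.div (tendsto_const_nhds.mul hlim1) (by positivity)
    have hlim3 : Tendsto (fun m:ℕ => (1+1/(m:ℝ))^m) atTop (𝓝 (Real.exp 1)) := by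
      simpa using Real.tendsto_one_add_div_pow_exp 1
    have hlim4 : Tendsto (fun m:ℕ => 1+1/(m:ℝ)) atTop (𝓝 (1:ℝ)) := by
      have h := (tendsto_one_div_atTop_nhds_zero_nat).const_add (1:ℝ)
      simpa using h
    have hlim5 : Tendsto (fun m:ℕ => (1+1/(m:ℝ))^(m+1)) atTop (𝓝 (Real.exp 1)) := by
      have h := hlim3.mul hlim4
      simp only [mul_one] at h
      simpa [pow_succ] using h
    have hlim6 : Tendsto (fun m:ℕ => (4*Real.pi/(Real.exp 1 * (Stirling.stirlingSeq m)^2))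
        * (1+1/(m:ℝ))^(m+1)) atTop (𝓝 4) := by
      have h := hlim2.mul hlim5
      have e : 4*Real.pi/(Real.exp 1*π)*Real.exp 1 = 4 := by
        field_simp
      rwa [e] at h
    apply hlim6.congr'
    filter_upwards [eventually_ge_atTop 1] with m hm
    have hm' : (0:ℝ) < (m:ℝ) := by exact_mod_cast hm
    have e1 : (1:ℝ)+1/(m:ℝ) = ((m:ℝ)+1)/(m:ℝ) := by field_simp
    rw [e1]
    have h := SSEM.T_eq m hm
    rw [hsq m, hsq (m+1)]
    push_cast
    push_cast at h
    exact h.symm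
  have hT4 : ∀ m:ℕ, 1 ≤ m → 4 ≤ Θ m^2 * Θ (m+1)^2 := by
    intro m hm
    apply le_of_tendsto hTlim
    filter_upwards [eventually_ge_atTop m] with k hk
    have p1 := hpos k (le_trans hm hk)
    have p2 := hpos (k+1) (by omega)
    have q1 : Θ k^2 ≤ Θ m^2 := pow_le_pow_left₀ p1.le (hanti m k hm hk) 2
    have q2 : Θ (k+1)^2 ≤ Θ (m+1)^2 :=
      pow_le_pow_left₀ p2.le (hanti (m+1) (k+1) (by omega) (by omega)) 2
    exact mul_le_mul q1 q2 (by positivity) (by positivity)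
  have hlow : ∀ m:ℕ, 1 ≤ m → Real.sqrt 2 < Θ m := by
    intro m hm
    have h4 := hT4 m hm
    have p0 := hpos m hm
    have p1 := hpos (m+1) (by omega)
    have hP : 2 ≤ Θ m * Θ (m+1) := by nlinarith [mul_pos p0 p1]
    have hgt : 2 < Θ m^2 := by nlinarith [hmono m hm]
    exact (Real.sqrt_lt' p0).mpr hgt
  exact ⟨hmono, fun m hm => ⟨hlow m hm, hupper m hm⟩⟩
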